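/- (Graphical straightening algorithm.) Fix w ∈ ℕⁿ. Every X_Γ with Γ a directed graph on {1,…,n} of multidegree w is a ℤ-linear combination of the polynomials X_Δ, where Δ ranges over non-crossing directed graphs on {1,…,n} of multidegree w. In other words, the non-crossing variables of multidegree w generate, as an abelian group, the subgroup of ℤ[u_1,…,u_n,v_1,…,v_n] generated by all X_Γ of multidegree w. -/
import Mathlib


open MvPolynomial

/-- A directed multigraph on the vertex set `Fin n`: a multiset of ordered pairs
(multiple edges allowed). -/
abbrev DGraph (n : ℕ) := Multiset (Fin n × Fin n)

/-- `Γ` has no loops. -/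
def DGraph.loopless {n : ℕ} (Γ : DGraph n) : Prop := ∀ e ∈ Γ, e.1 ≠ e.2

/-- The multidegree (valence) of `Γ` at the vertex `v`: the number of edges of `Γ`
incident to `v`, counted with multiplicity. -/
def DGraph.mdeg {n : ℕ} (Γ : DGraph n) (v : Fin n) : ℕ :=
  Multiset.countP (fun e => e.1 = v) Γ + Multiset.countP (fun e => e.2 = v) Γ

/-- A perfect matching on `{1,…,n}`: a directed graph of multidegree `(1,…,1)`.
(Multidegree one everywhere forces looplessness.) -/
def DGraph.isPM {n : ℕ} (Γ : DGraph n) : Prop := ∀ v, Γ.mdeg v = 1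

/-- The invariant `X_Γ = ∏_{(i,j) ∈ Γ} (u_j v_i - u_i v_j)`, where the variable
`Sum.inl i` plays the role of `u_i` and `Sum.inr i` plays the role of `v_i`. -/
noncomputable def XG {n : ℕ} (Γ : DGraph n) : MvPolynomial (Fin n ⊕ Fin n) ℤ :=
  (Γ.map (fun e => X (Sum.inl e.2) * X (Sum.inr e.1) - X (Sum.inl e.1) * X (Sum.inr e.2))).prod

/-- Two edges with underlying vertex pairs `{a,b}` (`a<b`) and `{c,d}` (`c<d`) cross iff
`a<c<b<d` or `c<a<d<b`.  (Edges sharing a vertex never cross.) -/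
def Crosses {n : ℕ} (e f : Fin n × Fin n) : Prop :=
  (min e.1 e.2 < min f.1 f.2 ∧ min f.1 f.2 < max e.1 e.2 ∧ max e.1 e.2 < max f.1 f.2) ∨
  (min f.1 f.2 < min e.1 e.2 ∧ min e.1 e.2 < max f.1 f.2 ∧ max f.1 f.2 < max e.1 e.2)

/-- A graph is non-crossing if no two of its edges cross. -/
def Noncrossing {n : ℕ} (Γ : DGraph n) : Prop := ∀ e ∈ Γ, ∀ f ∈ Γ, ¬ Crosses e f

/-! ### Auxiliary machinery for the straightening proof -/

/-- The bracket polynomial attached to a single edge. -/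
noncomputable def XE {n : ℕ} (e : Fin n × Fin n) : MvPolynomial (Fin n ⊕ Fin n) ℤ :=
  X (Sum.inl e.2) * X (Sum.inr e.1) - X (Sum.inl e.1) * X (Sum.inr e.2)

lemma XG_cons {n : ℕ} (e : Fin n × Fin n) (Γ : DGraph n) :
    XG (e ::ₘ Γ) = XE e * XG Γ := by
  simp [XG, XE]

/-- The three-term Plücker (Grassmann–Plücker) relation. -/
lemma plucker {n : ℕ} (a b c d : Fin n) :
    XE (a,c) * XE (b,d) = XE (a,b) * XE (c,d) + XE (a,d) * XE (b,c) := by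
  simp only [XE]; ring

lemma XE_minmax {n : ℕ} (e : Fin n × Fin n) :
    XE e = XE (min e.1 e.2, max e.1 e.2) ∨ XE e = -XE (min e.1 e.2, max e.1 e.2) := by
  rcases le_total e.1 e.2 with h | h
  · left; rw [min_eq_left h, max_eq_right h]
  · right; rw [min_eq_right h, max_eq_left h]; simp only [XE]; ring

/-- The length of an edge. -/
def elen {n : ℕ} (e : Fin n × Fin n) : ℕ := (max e.1 e.2).val - (min e.1 e.2).val

/-- The termination measure: `Σ_e len(e) (2n - len(e))`. -/
def mu {n : ℕ} (Γ : DGraph n) : ℕ := (Γ.map (fun e => elen e * (2 * n - elen e))).sum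

lemma mu_cons {n : ℕ} (e : Fin n × Fin n) (Γ : DGraph n) :
    mu (e ::ₘ Γ) = elen e * (2 * n - elen e) + mu Γ := by
  simp [mu]

lemma mdeg_cons {n : ℕ} (e : Fin n × Fin n) (Γ : DGraph n) (v : Fin n) :
    DGraph.mdeg (e ::ₘ Γ) v = ((if e.1 = v then 1 else 0) + (if e.2 = v then 1 else 0)) + Γ.mdeg v := by
  simp only [DGraph.mdeg, Multiset.countP_cons]
  ring

lemma ind_minmax {n : ℕ} (x y v : Fin n) :
    ((if min x y = v then 1 else 0) + (if max x y = v then 1 else 0) : ℕ)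
      = (if x = v then 1 else 0) + (if y = v then 1 else 0) := by
  rcases le_total x y with h | h
  · rw [min_eq_left h, max_eq_right h]
  · rw [min_eq_right h, max_eq_left h]; exact add_comm _ _

lemma keyN1 (n a b c d : ℕ) (h1 : a < b) (h2 : b < c) (h3 : c < d) (h4 : d < n) :
    (b-a)*(2*n-(b-a)) + (d-c)*(2*n-(d-c)) < (c-a)*(2*n-(c-a)) + (d-b)*(2*n-(d-b)) := by
  zify [show a ≤ b by omega, show b - a ≤ 2*n by omega, show c ≤ d by omega,
    show d - c ≤ 2*n by omega, show a ≤ c by omega, show c - a ≤ 2*n by omega,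
    show b ≤ d by omega, show d - b ≤ 2*n by omega]
  nlinarith [mul_pos (show (0:ℤ) < (c:ℤ) - b by omega)
    (show (0:ℤ) < 2*(n:ℤ) - ((d:ℤ) - a) by omega)]

lemma keyN2 (n a b c d : ℕ) (h1 : a < b) (h2 : b < c) (h3 : c < d) (h4 : d < n) :
    (d-a)*(2*n-(d-a)) + (c-b)*(2*n-(c-b)) < (c-a)*(2*n-(c-a)) + (d-b)*(2*n-(d-b)) := by
  zify [show a ≤ d by omega, show d - a ≤ 2*n by omega, show b ≤ c by omega,
    show c - b ≤ 2*n by omega, show a ≤ c by omega, show c - a ≤ 2*n by omega,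
    show b ≤ d by omega, show d - b ≤ 2*n by omega]
  nlinarith [mul_pos (show (0:ℤ) < (d:ℤ) - c by omega)
    (show (0:ℤ) < (b:ℤ) - a by omega)]

/-- The single straightening step: a crossing pair of edges is resolved into the
two non-crossing resolutions, both of which have strictly smaller measure. -/
lemma step {n : ℕ} (e f : Fin n × Fin n) (G : DGraph n)
    (h1 : min e.1 e.2 < min f.1 f.2) (h2 : min f.1 f.2 < max e.1 e.2)
    (h3 : max e.1 e.2 < max f.1 f.2) (hl : DGraph.loopless (e ::ₘ f ::ₘ G)) :
    ∃ Δ₁ Δ₂ : DGraph n, Δ₁.loopless ∧ Δ₂.loopless ∧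
      (∀ v, Δ₁.mdeg v = DGraph.mdeg (e ::ₘ f ::ₘ G) v) ∧
      (∀ v, Δ₂.mdeg v = DGraph.mdeg (e ::ₘ f ::ₘ G) v) ∧
      mu Δ₁ < mu (e ::ₘ f ::ₘ G) ∧ mu Δ₂ < mu (e ::ₘ f ::ₘ G) ∧
      (XG (e ::ₘ f ::ₘ G) = XG Δ₁ + XG Δ₂ ∨ XG (e ::ₘ f ::ₘ G) = -(XG Δ₁ + XG Δ₂)) := by
  set a := min e.1 e.2 with ha
  set c := max e.1 e.2 with hc
  set b := min f.1 f.2 with hb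
  set d := max f.1 f.2 with hd
  have hGl : G.loopless := fun e' he' => hl e' (Multiset.mem_cons_of_mem (Multiset.mem_cons_of_mem he'))
  have hac : a < c := lt_trans h1 h2
  have had : a < d := lt_trans hac h3
  have hbd : b < d := lt_trans h2 h3
  refine ⟨(a,b) ::ₘ (c,d) ::ₘ G, (a,d) ::ₘ (b,c) ::ₘ G, ?_, ?_, ?_, ?_, ?_, ?_, ?_⟩
  · intro e' he'
    rcases Multiset.mem_cons.1 he' with rfl | he'
    · exact ne_of_lt h1
    rcases Multiset.mem_cons.1 he' with rfl | he'
    · exact ne_of_lt h3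
    · exact hGl e' he'
  · intro e' he'
    rcases Multiset.mem_cons.1 he' with rfl | he'
    · exact ne_of_lt had
    rcases Multiset.mem_cons.1 he' with rfl | he'
    · exact ne_of_lt h2
    · exact hGl e' he'
  · intro v
    simp only [mdeg_cons]
    have hE := ind_minmax e.1 e.2 v
    have hF := ind_minmax f.1 f.2 v
    rw [← ha, ← hc] at hE
    rw [← hb, ← hd] at hF
    linarith
  · intro v
    simp only [mdeg_cons]
    have hE := ind_minmax e.1 e.2 v
    have hF := ind_minmax f.1 f.2 v
    rw [← ha, ← hc] at hE
    rw [← hb, ← hd] at hF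
    linarith
  · simp only [mu_cons]
    have he1 : elen e = c.val - a.val := rfl
    have hf1 : elen f = d.val - b.val := rfl
    have h2' : elen (a,b) = b.val - a.val := by
      simp only [elen]; rw [max_eq_right (le_of_lt h1), min_eq_left (le_of_lt h1)]
    have h3' : elen (c,d) = d.val - c.val := by
      simp only [elen]; rw [max_eq_right (le_of_lt h3), min_eq_left (le_of_lt h3)]
    rw [he1, hf1, h2', h3']
    have := keyN1 n a.val b.val c.val d.val h1 h2 h3 d.isLt
    linarith
  · simp only [mu_cons]
    have he1 : elen e = c.val - a.val := rfl
    have hf1 : elen f = d.val - b.val := rfl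
    have h2' : elen (a,d) = d.val - a.val := by
      simp only [elen]; rw [max_eq_right (le_of_lt had), min_eq_left (le_of_lt had)]
    have h3' : elen (b,c) = c.val - b.val := by
      simp only [elen]; rw [max_eq_right (le_of_lt h2), min_eq_left (le_of_lt h2)]
    rw [he1, hf1, h2', h3']
    have := keyN2 n a.val b.val c.val d.val h1 h2 h3 d.isLt
    linarith
  · have hp := plucker a b c d
    have he := XE_minmax e
    have hf := XE_minmax f
    rw [← ha, ← hc] at he
    rw [← hb, ← hd] at hf
    simp only [XG_cons]
    rcases he with he | he <;> rcases hf with hf | hf <;> rw [he, hf] <;>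
      first
        | (left; linear_combination XG G * hp)
        | (right; linear_combination (-(XG G)) * hp)

lemma mainAux {n : ℕ} (w : Fin n → ℕ) (k : ℕ) :
    ∀ Γ : DGraph n, mu Γ = k → Γ.loopless → (∀ v, Γ.mdeg v = w v) →
    XG Γ ∈ AddSubgroup.closure
      {p | ∃ Δ : DGraph n, Δ.loopless ∧ (∀ v, Δ.mdeg v = w v) ∧ Noncrossing Δ ∧ p = XG Δ} := by
  induction k using Nat.strong_induction_on with
  | _ k ih =>
    intro Γ hk hl hdeg
    by_cases hnc : Noncrossing Γ
    · exact AddSubgroup.subset_closure ⟨Γ, hl, hdeg, hnc, rfl⟩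
    · unfold Noncrossing at hnc
      push_neg at hnc
      obtain ⟨e, he, f, hf, hef⟩ := hnc
      have hne : f ≠ e := by
        rintro rfl
        rcases hef with ⟨h, -⟩ | ⟨h, -⟩ <;> exact lt_irrefl _ h
      have hf' : f ∈ Γ.erase e := (Multiset.mem_erase_of_ne hne).2 hf
      have hΓ : Γ = e ::ₘ f ::ₘ ((Γ.erase e).erase f) := by
        rw [Multiset.cons_erase hf', Multiset.cons_erase he]
      obtain ⟨e', f', G, hΓ', h1, h2, h3⟩ :
          ∃ (e' f' : Fin n × Fin n) (G : DGraph n), Γ = e' ::ₘ f' ::ₘ G ∧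
            min e'.1 e'.2 < min f'.1 f'.2 ∧ min f'.1 f'.2 < max e'.1 e'.2 ∧
            max e'.1 e'.2 < max f'.1 f'.2 := by
        rcases hef with ⟨g1, g2, g3⟩ | ⟨g1, g2, g3⟩
        · exact ⟨e, f, _, hΓ, g1, g2, g3⟩
        · exact ⟨f, e, _, hΓ.trans (Multiset.cons_swap e f _), g1, g2, g3⟩
      obtain ⟨Δ₁, Δ₂, l1, l2, m1, m2, u1, u2, hx⟩ := step e' f' G h1 h2 h3 (hΓ' ▸ hl)
      have hdeg' : ∀ v, DGraph.mdeg (e' ::ₘ f' ::ₘ G) v = w v := fun v => by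
        rw [← hΓ']; exact hdeg v
      have c1 := ih (mu Δ₁) (by rw [← hk, hΓ']; exact u1) Δ₁ rfl l1
        (fun v => (m1 v).trans (hdeg' v))
      have c2 := ih (mu Δ₂) (by rw [← hk, hΓ']; exact u2) Δ₂ rfl l2
        (fun v => (m2 v).trans (hdeg' v))
      rw [hΓ']
      rcases hx with hx | hx
      · rw [hx]; exact add_mem c1 c2
      · rw [hx]; exact neg_mem (add_mem c1 c2)

/-- **Graphical straightening algorithm.** For any `w ∈ ℕⁿ`, every `X_Γ` with `Γ` of
multidegree `w` is a `ℤ`-linear combination of the `X_Δ` with `Δ` non-crossing of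
multidegree `w`: the non-crossing variables generate, as an abelian group, the subgroup
generated by all `X_Γ` of multidegree `w`. -/
theorem straightening (n : ℕ) (w : Fin n → ℕ) (Γ : DGraph n)
    (hΓl : Γ.loopless) (hΓdeg : ∀ v, Γ.mdeg v = w v) :
    XG Γ ∈ AddSubgroup.closure
      {p | ∃ Δ : DGraph n, Δ.loopless ∧ (∀ v, Δ.mdeg v = w v) ∧ Noncrossing Δ ∧ p = XG Δ} := by
  exact mainAux w (mu Γ) Γ rfl hΓl hΓdeg
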